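/- For generators ℓ_p with Γ(ℓ_p) = <p> ℓ_p, the twisted Jacobi identity [[ℓ_m,ℓ_n]_q, Γ(ℓ_p)]_q + [[ℓ_n,ℓ_p]_q, Γ(ℓ_m)]_q + [[ℓ_p,ℓ_m]_q, Γ(ℓ_n)]_q = 0 holds in the q-Witt algebra, where [ℓ_a,ℓ_b]_q = [a−b] ℓ_{a+b}. -/

import Mathlib

open Finsupp

noncomputable section

/-- q-number [k]. -/
def qn (q : ℝ) (k : ℤ) : ℝ := (q ^ k - q ^ (-k)) / (q - q⁻¹)

/-- Free module with basis ℓ_n, n ∈ ℤ. -/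
abbrev WittQ := ℤ →₀ ℝ

/-- Basis element ℓ_n. -/
def ell (n : ℤ) : WittQ := Finsupp.single n (1 : ℝ)

/-- Graded q-bracket, determined on basis elements by [ℓ_a, ℓ_b]_q = [a-b] ℓ_{a+b},
extended bilinearly with weights respecting degrees. -/
def qbr (q : ℝ) (f g : WittQ) : WittQ :=
  f.sum fun a x => g.sum fun b y => Finsupp.single (a + b) (x * y * qn q (a - b))

/-- Γ(ℓ_p) = <p> ℓ_p, extended linearly. -/
def Gam (q : ℝ) (f : WittQ) : WittQ :=
  f.sum fun p x => Finsupp.single p ((q ^ p + q ^ (-p)) * x)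

lemma qbr_single (q : ℝ) (a b : ℤ) (x y : ℝ) :
    qbr q (Finsupp.single a x) (Finsupp.single b y)
      = Finsupp.single (a + b) (x * y * qn q (a - b)) := by
  unfold qbr
  rw [Finsupp.sum_single_index, Finsupp.sum_single_index]
  · simp only [mul_zero, zero_mul, Finsupp.single_zero]
  · simp only [zero_mul, Finsupp.single_zero, Finsupp.sum_fun_zero]

lemma Gam_single (q : ℝ) (k : ℤ) (x : ℝ) :
    Gam q (Finsupp.single k x) = Finsupp.single k ((q ^ k + q ^ (-k)) * x) := by
  unfold Gam
  rw [Finsupp.sum_single_index]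
  simp only [mul_zero, Finsupp.single_zero]

theorem stmt17 (q : ℝ) (hq0 : q ≠ 0) (hq1 : q ≠ 1) (hqm1 : q ≠ -1) (m n p : ℤ) :
    qbr q (qbr q (ell m) (ell n)) (Gam q (ell p))
      + qbr q (qbr q (ell n) (ell p)) (Gam q (ell m))
      + qbr q (qbr q (ell p) (ell m)) (Gam q (ell n)) = 0 := by
  simp only [ell, Gam_single, qbr_single, mul_one]
  have e1 : n + p + m = m + n + p := by ring
  have e2 : p + m + n = m + n + p := by ring
  rw [e1, e2, ← Finsupp.single_add, ← Finsupp.single_add, Finsupp.single_eq_zero]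
  have hD : q - q⁻¹ ≠ 0 := by
    intro h
    have h2 : q ^ 2 = 1 := by field_simp at h; nlinarith [h]
    rcases sq_eq_one_iff.mp h2 with h1 | h1 <;> simp_all
  have hq2 : q * q - 1 ≠ 0 := by
    intro h
    have h2 : q ^ 2 = 1 := by nlinarith
    rcases sq_eq_one_iff.mp h2 with h1 | h1 <;> simp_all
  have key : ∀ k : ℤ, q ^ (-k) = (q ^ k)⁻¹ := fun k => zpow_neg q k
  simp only [qn, key, neg_sub, zpow_add₀ hq0, zpow_sub₀ hq0]
  have hm := zpow_ne_zero m hq0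
  have hn := zpow_ne_zero n hq0
  have hp := zpow_ne_zero p hq0
  field_simp
  ring
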